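/- Let {a,b,c,d} be four points in the plane such that {(a,b),(c,d)} is a max-sum matching of {a,b,c,d} (that is, ‖a−b‖+‖c−d‖ ≥ ‖a−c‖+‖b−d‖ and ‖a−b‖+‖c−d‖ ≥ ‖a−d‖+‖b−c‖), and such that d belongs to the interior of the triangle with vertices a, b, c. Then d belongs to the interior of the disk D_{ab}, i.e., ‖d − (a+b)/2‖ < ‖a−b‖/2. -/

import Mathlib

noncomputable section

open scoped RealInnerProductSpace

set_option maxHeartbeats 1000000

/-- Points of the plane with the Euclidean norm. -/
abbrev Pt : Type := EuclideanSpace ℝ (Fin 2)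

/-- The closed disk with diameter the segment `pq`: center `(p+q)/2`, radius `‖p-q‖/2`. -/
def disk (p q : Pt) : Set Pt := Metric.closedBall (midpoint ℝ p q) (dist p q / 2)

private lemma keylem (x y T al be ga A B C W : ℝ)
    (hx : 0 < x) (hy : 0 < y) (hal : 0 < al) (hbe : 0 < be) (hga : 0 < ga)
    (hA0 : 0 ≤ A) (hB0 : 0 ≤ B) (hC0 : 0 ≤ C) (hW0 : 0 < W)
    (hT0 : 0 ≤ T) (hTxy : T ≤ x * y)
    (hB2 : B ^ 2 = x ^ 2 + y ^ 2 - 2 * T)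
    (hW2 : (ga * W) ^ 2 = al ^ 2 * x ^ 2 + be ^ 2 * y ^ 2 + 2 * al * be * T)
    (hA2 : (ga * A) ^ 2 = (ga + al) ^ 2 * x ^ 2 + be ^ 2 * y ^ 2 + 2 * (ga + al) * be * T)
    (hC2 : (ga * C) ^ 2 = al ^ 2 * x ^ 2 + (ga + be) ^ 2 * y ^ 2 + 2 * al * (ga + be) * T)
    (h1 : A + y ≤ B + W) (h2 : C + x ≤ B + W) : False := by
  have hB2g : (ga * B) ^ 2 = ga ^ 2 * (x ^ 2 + y ^ 2 - 2 * T) := by rw [mul_pow, hB2]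
  have s1 : ga * A ≤ ga * B + ga * W - ga * y := by
    linarith [mul_le_mul_of_nonneg_left h1 hga.le]
  have s2 : (ga * A) ^ 2 ≤ (ga * B + ga * W - ga * y) ^ 2 :=
    pow_le_pow_left₀ (mul_nonneg hga.le hA0) s1 2
  have P1 : ga * al * x ^ 2 + ga * (ga + be) * T ≤ ga ^ 2 * ((B - y) * (W - y)) := by
    linarith [s2, hA2, hB2g, hW2, sq_nonneg (ga * B + ga * W - ga * y)]
  have s1' : ga * C ≤ ga * B + ga * W - ga * x := by
    linarith [mul_le_mul_of_nonneg_left h2 hga.le]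
  have s2' : (ga * C) ^ 2 ≤ (ga * B + ga * W - ga * x) ^ 2 :=
    pow_le_pow_left₀ (mul_nonneg hga.le hC0) s1' 2
  have P2 : ga * be * y ^ 2 + ga * (ga + al) * T ≤ ga ^ 2 * ((B - x) * (W - x)) := by
    linarith [s2', hC2, hB2g, hW2]
  have hWle : ga * W ≤ al * x + be * y := by
    have hnn : (0:ℝ) ≤ al * x + be * y := by positivity
    have hsq : (ga * W) ^ 2 ≤ (al * x + be * y) ^ 2 := by
      linarith [hW2, mul_le_mul_of_nonneg_left hTxy (by positivity : (0:ℝ) ≤ 2 * al * be)]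
    exact le_of_pow_le_pow_left₀ two_ne_zero hnn hsq
  have hcoef : (x + y) * B < x ^ 2 + y ^ 2 + x * y + T := by
    have hPB : ((x + y) * B) ^ 2 = (x + y) ^ 2 * (x ^ 2 + y ^ 2 - 2 * T) := by rw [mul_pow, hB2]
    have hnn : (0:ℝ) ≤ x ^ 2 + y ^ 2 + x * y + T := by
      linarith [mul_pos hx hy, sq_nonneg x, sq_nonneg y]
    have hsq : ((x + y) * B) ^ 2 < (x ^ 2 + y ^ 2 + x * y + T) ^ 2 := by
      linarith [hPB, mul_pos (mul_pos hx hx) (mul_pos hy hy), sq_nonneg T,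
        mul_nonneg hT0 (sq_nonneg (x + y)), mul_nonneg hT0 (mul_pos hx hy).le,
        mul_nonneg hT0 (sq_nonneg x), mul_nonneg hT0 (sq_nonneg y)]
    exact lt_of_pow_lt_pow_left₀ 2 hnn hsq
  have hg : x ^ 3 + y ^ 3 ≤ B * (x ^ 2 + y ^ 2) + T * (x + y) := by
    have h1' : 0 ≤ B ^ 2 - (x - y) ^ 2 := by linarith [hB2, hTxy]
    have h2' : 0 ≤ x ^ 2 + y ^ 2 - B ^ 2 := by linarith [hB2, hT0]
    have t1 : 0 ≤ x * y * ((x + y) ^ 2 * ((B ^ 2 - (x - y) ^ 2) * (x ^ 2 + y ^ 2 - B ^ 2))) :=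
      mul_nonneg (mul_pos hx hy).le (mul_nonneg (sq_nonneg _) (mul_nonneg h1' h2'))
    have t2 : 0 ≤ (x ^ 2 + y ^ 2 - B ^ 2) * ((x - y) ^ 2 * (x ^ 2 * y ^ 2)) :=
      mul_nonneg h2' (by positivity)
    have t3 : 0 ≤ (B ^ 2 - (x - y) ^ 2) * (x ^ 2 * y ^ 2 * ((x - y) ^ 2 + 2 * x ^ 2 + 2 * y ^ 2)) :=
      mul_nonneg h1' (by positivity)
    have hxy : (0:ℝ) < x * y := mul_pos hx hy
    have hq2 : 0 ≤ x * y * ((2 * B * (x ^ 2 + y ^ 2)) ^ 2 - ((x + y) * (B ^ 2 + (x - y) ^ 2)) ^ 2) := by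
      linarith [t1, t2, t3]
    have hq : ((x + y) * (B ^ 2 + (x - y) ^ 2)) ^ 2 ≤ (2 * B * (x ^ 2 + y ^ 2)) ^ 2 := by
      have := (mul_nonneg_iff_of_pos_left hxy).mp hq2
      linarith [this]
    have h2BS : (0:ℝ) ≤ 2 * B * (x ^ 2 + y ^ 2) := by positivity
    have hq' : (x + y) * (B ^ 2 + (x - y) ^ 2) ≤ 2 * B * (x ^ 2 + y ^ 2) :=
      le_of_pow_le_pow_left₀ two_ne_zero h2BS hq
    have hsub : (x + y) * (B ^ 2 + (x - y) ^ 2)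
        = (x + y) * ((x ^ 2 + y ^ 2 - 2 * T) + (x - y) ^ 2) := by rw [hB2]
    linarith [hq', hsub]
  have M1 := mul_le_mul_of_nonneg_left P1 hy.le
  have M2 := mul_le_mul_of_nonneg_left P2 hx.le
  have hxyT : (0:ℝ) ≤ x * y + T := add_nonneg (mul_pos hx hy).le hT0
  have S1 : ga * ((x * y + T) * (ga * W)) ≤ ga * ((x * y + T) * (al * x + be * y)) :=
    mul_le_mul_of_nonneg_left (mul_le_mul_of_nonneg_left hWle hxyT) hga.le
  have fact1 : W * ((x + y) * B) < W * (x ^ 2 + y ^ 2 + x * y + T) :=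
    mul_lt_mul_of_pos_left hcoef hW0
  have hEneg : y * ((B - y) * (W - y)) + x * ((B - x) * (W - x))
      - (x * y + T) * W - T * (x + y) < 0 := by linarith [fact1, hg]
  have hfin : 0 ≤ ga ^ 2 * (y * ((B - y) * (W - y)) + x * ((B - x) * (W - x))
      - (x * y + T) * W - T * (x + y)) := by linarith [M1, M2, S1]
  linarith [mul_neg_of_pos_of_neg (by positivity : (0:ℝ) < ga ^ 2) hEneg]

/-- If {(a,b),(c,d)} is a max-sum matching of {a,b,c,d} and d lies in the interior of the
triangle abc, then d lies in the interior of the disk with diameter ab. -/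
theorem stmt6 (a b c d : Pt)
    (h1 : dist a c + dist b d ≤ dist a b + dist c d)
    (h2 : dist a d + dist b c ≤ dist a b + dist c d)
    (hd : d ∈ interior (convexHull ℝ ({a, b, c} : Set Pt))) :
    dist d (midpoint ℝ a b) < dist a b / 2 := by
  by_contra hcon
  push_neg at hcon
  -- Extract barycentric coordinates
  have hrange : Set.range ![a, b, c] = ({a, b, c} : Set Pt) := by
    simp [Matrix.range_cons, Matrix.range_empty]; ext z; simp; tauto
  have hspan : affineSpan ℝ ({a, b, c} : Set Pt) = ⊤ := by
    rw [← affineSpan_convexHull]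
    exact (convex_convexHull ℝ _).interior_nonempty_iff_affineSpan_eq_top.mp ⟨d, hd⟩
  have hspan' : affineSpan ℝ (Set.range ![a, b, c]) = ⊤ := by rw [hrange]; exact hspan
  have hind : AffineIndependent ℝ ![a, b, c] := by
    rw [affineIndependent_iff_le_finrank_vectorSpan ℝ _ (show Fintype.card (Fin 3) = 2 + 1 by simp)]
    rw [AffineSubspace.vectorSpan_eq_top_of_affineSpan_eq_top ℝ Pt Pt hspan', finrank_top]
    simp [finrank_euclideanSpace]
  set bs : AffineBasis (Fin 3) ℝ Pt := ⟨![a, b, c], hind, hspan'⟩ with hbs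
  have hd' : ∀ i, 0 < bs.coord i d := by
    have hset := bs.interior_convexHull
    rw [show Set.range ⇑bs = ({a, b, c} : Set Pt) from hrange] at hset
    rw [hset] at hd; exact hd
  set al := bs.coord 0 d with hal_def
  set be := bs.coord 1 d with hbe_def
  set ga := bs.coord 2 d with hga_def
  have hal : 0 < al := hd' 0
  have hbe : 0 < be := hd' 1
  have hga : 0 < ga := hd' 2
  have hsum : al + be + ga = 1 := by
    have := bs.sum_coord_apply_eq_one d
    rw [Fin.sum_univ_three] at this; exact this
  have hcomb : al • a + be • b + ga • c = d := by
    have h2' := bs.affineCombination_coord_eq_self d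
    rw [Finset.affineCombination_eq_linear_combination _ _ _ (bs.sum_coord_apply_eq_one d)] at h2'
    rw [Fin.sum_univ_three] at h2'
    exact h2'
  have hvertex : ∀ (i j : Fin 3), i ≠ j → (![a, b, c] j) ≠ d := by
    intro i j hij h
    have h1' := hd' i
    rw [← h] at h1'
    have : bs.coord i (bs j) = 0 := by rw [AffineBasis.coord_apply, if_neg hij]
    have hbj : bs j = ![a, b, c] j := rfl
    rw [hbj] at this
    rw [this] at h1'; exact lt_irrefl 0 h1'
  have had : a ≠ d := hvertex 1 0 (by decide)
  have hbd : b ≠ d := hvertex 0 1 (by decide)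
  have hcd : c ≠ d := hvertex 0 2 (by decide)
  -- vectors
  set u : Pt := a - d with hu
  set v : Pt := b - d with hv
  set w : Pt := c - d with hw
  have h0 : al • u + be • v + ga • w = 0 := by
    have e : al • u + be • v + ga • w = (al • a + be • b + ga • c) - (al + be + ga) • d := by
      simp only [hu, hv, hw, smul_sub, add_smul]; abel
    rw [e, hcomb, hsum, one_smul, sub_self]
  have hgw : ga • w = -(al • u + be • v) := eq_neg_of_add_eq_zero_right h0
  set T : ℝ := ⟪u, v⟫ with hT
  have hx0 : 0 < ‖u‖ := by rw [norm_pos_iff]; exact sub_ne_zero.mpr had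
  have hy0 : 0 < ‖v‖ := by rw [norm_pos_iff]; exact sub_ne_zero.mpr hbd
  have hW0 : 0 < ‖w‖ := by rw [norm_pos_iff]; exact sub_ne_zero.mpr hcd
  have hTxy : T ≤ ‖u‖ * ‖v‖ := real_inner_le_norm u v
  -- negated goal gives T ≥ 0
  have hT0 : 0 ≤ T := by
    have h2m : midpoint ℝ a b + midpoint ℝ a b = a + b := midpoint_add_self ℝ a b
    have hsum2 : (midpoint ℝ a b - d) + (midpoint ℝ a b - d) = u + v := by
      rw [hu, hv]
      calc (midpoint ℝ a b - d) + (midpoint ℝ a b - d)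
          = (midpoint ℝ a b + midpoint ℝ a b) - (d + d) := by abel
        _ = (a + b) - (d + d) := by rw [h2m]
        _ = (a - d) + (b - d) := by abel
    have hn : ‖u + v‖ = 2 * dist d (midpoint ℝ a b) := by
      rw [← hsum2, dist_comm, dist_eq_norm]
      rw [show (midpoint ℝ a b - d) + (midpoint ℝ a b - d)
          = (2:ℝ) • (midpoint ℝ a b - d) from (two_smul ℝ _).symm]
      rw [norm_smul]; simp
    have hab : dist a b = ‖u - v‖ := by
      rw [dist_eq_norm, hu, hv]
      congr 1; abel
    have hle : ‖u - v‖ ≤ ‖u + v‖ := by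
      rw [hn, ← hab]; linarith [hcon]
    have hsq := pow_le_pow_left₀ (norm_nonneg (u - v)) hle 2
    rw [norm_sub_sq_real, norm_add_sq_real] at hsq
    rw [hT]; linarith [hsq]
  -- distance identities
  have hB2 : ‖a - b‖ ^ 2 = ‖u‖ ^ 2 + ‖v‖ ^ 2 - 2 * T := by
    rw [show a - b = u - v from by rw [hu, hv]; abel, norm_sub_sq_real, hT]; ring
  have habs : ∀ r : ℝ, 0 < r → |r| = r := fun r hr => abs_of_pos hr
  have hW2 : (ga * ‖w‖) ^ 2 = al ^ 2 * ‖u‖ ^ 2 + be ^ 2 * ‖v‖ ^ 2 + 2 * al * be * T := by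
    have e1 : ga * ‖w‖ = ‖al • u + be • v‖ := by
      rw [← norm_neg (al • u + be • v), ← hgw, norm_smul, Real.norm_eq_abs, abs_of_pos hga]
    rw [e1, norm_add_sq_real, real_inner_smul_left, real_inner_smul_right,
      norm_smul, norm_smul, Real.norm_eq_abs, Real.norm_eq_abs,
      abs_of_pos hal, abs_of_pos hbe, hT]
    ring
  have hA2 : (ga * ‖a - c‖) ^ 2
      = (ga + al) ^ 2 * ‖u‖ ^ 2 + be ^ 2 * ‖v‖ ^ 2 + 2 * (ga + al) * be * T := by
    have e0 : ga • (a - c) = (ga + al) • u + be • v := by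
      rw [show a - c = u - w from by rw [hu, hw]; abel, smul_sub, hgw]
      module
    have e1 : ga * ‖a - c‖ = ‖(ga + al) • u + be • v‖ := by
      rw [← e0, norm_smul, Real.norm_eq_abs, abs_of_pos hga]
    rw [e1, norm_add_sq_real, real_inner_smul_left, real_inner_smul_right,
      norm_smul, norm_smul, Real.norm_eq_abs, Real.norm_eq_abs,
      abs_of_pos (by linarith : (0:ℝ) < ga + al), abs_of_pos hbe, hT]
    ring
  have hC2 : (ga * ‖b - c‖) ^ 2
      = al ^ 2 * ‖u‖ ^ 2 + (ga + be) ^ 2 * ‖v‖ ^ 2 + 2 * al * (ga + be) * T := by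
    have e0 : ga • (b - c) = al • u + (ga + be) • v := by
      rw [show b - c = v - w from by rw [hv, hw]; abel, smul_sub, hgw]
      module
    have e1 : ga * ‖b - c‖ = ‖al • u + (ga + be) • v‖ := by
      rw [← e0, norm_smul, Real.norm_eq_abs, abs_of_pos hga]
    rw [e1, norm_add_sq_real, real_inner_smul_left, real_inner_smul_right,
      norm_smul, norm_smul, Real.norm_eq_abs, Real.norm_eq_abs,
      abs_of_pos hal, abs_of_pos (by linarith : (0:ℝ) < ga + be), hT]
    ring
  -- rewrite the matching hypotheses
  have h1' : ‖a - c‖ + ‖v‖ ≤ ‖a - b‖ + ‖w‖ := by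
    have := h1
    rw [dist_eq_norm, dist_eq_norm, dist_eq_norm, dist_eq_norm] at this
    rw [hv, hw]; exact this
  have h2' : ‖b - c‖ + ‖u‖ ≤ ‖a - b‖ + ‖w‖ := by
    have := h2
    rw [dist_eq_norm, dist_eq_norm, dist_eq_norm, dist_eq_norm] at this
    rw [hu, hw]; linarith [this]
  exact keylem ‖u‖ ‖v‖ T al be ga ‖a - c‖ ‖a - b‖ ‖b - c‖ ‖w‖
    hx0 hy0 hal hbe hga (norm_nonneg _) (norm_nonneg _) (norm_nonneg _) hW0
    hT0 hTxy hB2 hW2 hA2 hC2 h1' h2'
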